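/- For 0 \le i \le j \le d one has F_i E^*_j = \mathcal{L}^{j-i} F_j E^*_j / ((\theta^*_j-\theta^*_i)(\theta^*_j-\theta^*_{i+1})\cdots(\theta^*_j-\theta^*_{j-1})). -/

import Mathlib

/-- For `0 ≤ i ≤ j ≤ d`,
`F_i E*_j = 𝓛^{j-i} F_j E*_j / ((θ*_j-θ*_i)(θ*_j-θ*_{i+1})⋯(θ*_j-θ*_{j-1}))`. -/
theorem stmt3 {F V : Type*} [Field F] [AddCommGroup V] [Module F V]
    [FiniteDimensional F V] (d : ℕ) (hd : 1 ≤ d)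
    (As : Module.End F V) (Es Fi : ℕ → Module.End F V) (θs : ℕ → F)
    (hEsEs : ∀ i ≤ d, ∀ j ≤ d, Es i * Es j = if i = j then Es i else 0)
    (hEssum : ∑ i ∈ Finset.range (d + 1), Es i = 1)
    (hAs : As = ∑ i ∈ Finset.range (d + 1), θs i • Es i)
    (hdist : ∀ i ≤ d, ∀ j ≤ d, i ≠ j → θs i ≠ θs j)
    (hFF : ∀ i ≤ d, ∀ j ≤ d, Fi i * Fi j = if i = j then Fi i else 0)
    (hFsum : ∑ i ∈ Finset.range (d + 1), Fi i = 1)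
    (L : Module.End F V)
    (hL : L = As - ∑ i ∈ Finset.range (d + 1), θs i • Fi i)
    (hFL : ∀ i, 1 ≤ i → i ≤ d → Fi (i - 1) * L = L * Fi i)
    (hL0 : L * Fi 0 = 0) :
    ∀ i j, i ≤ j → j ≤ d →
      Fi i * Es j =
        (∏ k ∈ Finset.Ico i j, (θs j - θs k))⁻¹ • (L ^ (j - i) * (Fi j * Es j)) := by
  have hAE : ∀ j ≤ d, As * Es j = θs j • Es j := by
    intro j hj
    rw [hAs, Finset.sum_mul, Finset.sum_eq_single j]
    · rw [smul_mul_assoc, hEsEs j hj j hj, if_pos rfl]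
    · intro k hk hkj
      rw [smul_mul_assoc, hEsEs k (Nat.lt_succ_iff.mp (Finset.mem_range.mp hk)) j hj,
        if_neg hkj, smul_zero]
    · intro h
      exact absurd (Finset.mem_range.mpr (Nat.lt_succ_of_le hj)) h
  have hFth : ∀ i ≤ d, Fi i * (∑ k ∈ Finset.range (d + 1), θs k • Fi k) = θs i • Fi i := by
    intro i hi
    rw [Finset.mul_sum, Finset.sum_eq_single i]
    · rw [mul_smul_comm, hFF i hi i hi, if_pos rfl]
    · intro k hk hki
      rw [mul_smul_comm, hFF i hi k (Nat.lt_succ_iff.mp (Finset.mem_range.mp hk)),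
        if_neg (Ne.symm hki), smul_zero]
    · intro h
      exact absurd (Finset.mem_range.mpr (Nat.lt_succ_of_le hi)) h
  have key : ∀ i j, i < j → j ≤ d →
      Fi i * Es j = (θs j - θs i)⁻¹ • (L * (Fi (i + 1) * Es j)) := by
    intro i j hij hjd
    have hid : i ≤ d := le_of_lt (lt_of_lt_of_le hij hjd)
    have h1 : Fi i * L = L * Fi (i + 1) := by
      have := hFL (i + 1) (by omega) (by omega)
      simpa using this
    have h2 : Fi i * L * Es j = (θs j - θs i) • (Fi i * Es j) := by
      rw [hL, mul_sub, hFth i hid, sub_mul, mul_assoc, hAE j hjd, mul_smul_comm,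
        smul_mul_assoc, sub_smul]
    have hne : θs j - θs i ≠ 0 :=
      sub_ne_zero.mpr (hdist j hjd i hid (by omega))
    have h3 : (θs j - θs i) • (Fi i * Es j) = L * (Fi (i + 1) * Es j) := by
      rw [← h2, h1, mul_assoc]
    rw [← h3, smul_smul, inv_mul_cancel₀ hne, one_smul]
  suffices h : ∀ n i, i + n ≤ d → Fi i * Es (i + n) =
      (∏ k ∈ Finset.Ico i (i + n), (θs (i + n) - θs k))⁻¹ •
        (L ^ n * (Fi (i + n) * Es (i + n))) by
    intro i j hij hjd
    obtain ⟨n, rfl⟩ := Nat.exists_eq_add_of_le hij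
    simpa using h n i hjd
  intro n
  induction n with
  | zero => intro i hi; simp
  | succ n ih =>
    intro i hi
    have hkey := key i (i + (n + 1)) (by omega) hi
    have hih := ih (i + 1) (by omega)
    have heq : i + 1 + n = i + (n + 1) := by omega
    rw [heq] at hih
    rw [hkey, hih,
      Finset.prod_eq_prod_Ico_succ_bot (by omega : i < i + (n + 1)),
      mul_inv, mul_smul_comm, smul_smul, pow_succ', mul_assoc]
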